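/- Let β = (e^{−1/e} − e^{−1})/(1 − e^{−1}) and let γ = (1 − e^{−1/e}) − e^{−1}·(4β − 2β²) + (2β − β²). Then γ ≥ 0.509, and for every s ∈ [0, 1], (1 − e^{−1/e} − β/e)·s − (β − β²)·s·e^{−s} + (2β − β²)·(1 − e^{−s}) ≥ γ·s. -/

import Mathlib

private lemma exp_lb_17 : (0.69220:ℝ) < Real.exp (-(0.3678795:ℝ)) := by
  have h := Real.exp_bound (x := -(0.3678795:ℝ)) (by rw [abs_neg]; norm_num [abs_of_nonneg]) (n := 7) (by norm_num)
  rw [abs_le] at h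
  simp only [Finset.sum_range_succ, Finset.sum_range_zero, Nat.factorial, abs_neg] at h
  rw [abs_of_nonneg (by norm_num : (0:ℝ) ≤ 0.3678795)] at h
  norm_num at h
  nlinarith [h.1]

private lemma exp_ub_17 : Real.exp (-(0.3678794:ℝ)) < 0.69221 := by
  have h := Real.exp_bound (x := -(0.3678794:ℝ)) (by rw [abs_neg]; norm_num [abs_of_nonneg]) (n := 7) (by norm_num)
  rw [abs_le] at h
  simp only [Finset.sum_range_succ, Finset.sum_range_zero, Nat.factorial, abs_neg] at h
  rw [abs_of_nonneg (by norm_num : (0:ℝ) ≤ 0.3678794)] at h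
  norm_num at h
  nlinarith [h.2]

/-- With `β = (e^{−1/e} − e^{−1})/(1 − e^{−1})` and
`γ = (1 − e^{−1/e}) − e^{−1}(4β − 2β²) + (2β − β²)`, we have `γ ≥ 0.509`, and for
every `s ∈ [0, 1]`,
`(1 − e^{−1/e} − β/e)s − (β − β²)·s·e^{−s} + (2β − β²)(1 − e^{−s}) ≥ γ·s`. -/
theorem stmt_17 (β γ : ℝ)
    (hβ : β = (Real.exp (-1 / Real.exp 1) - Real.exp (-1)) / (1 - Real.exp (-1)))
    (hγ : γ = (1 - Real.exp (-1 / Real.exp 1))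
        - Real.exp (-1) * (4 * β - 2 * β ^ 2) + (2 * β - β ^ 2)) :
    γ ≥ 0.509 ∧
    ∀ s : ℝ, 0 ≤ s → s ≤ 1 →
      (1 - Real.exp (-1 / Real.exp 1) - β / Real.exp 1) * s
          - (β - β ^ 2) * s * Real.exp (-s)
          + (2 * β - β ^ 2) * (1 - Real.exp (-s)) ≥ γ * s := by
  have he := Real.exp_one_gt_d9
  have he' := Real.exp_one_lt_d9
  have hyprod : Real.exp (-1) * Real.exp 1 = 1 := by
    rw [← Real.exp_add]; norm_num
  have hy1 : (0.3678794:ℝ) < Real.exp (-1) := by nlinarith [Real.exp_pos (-1)]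
  have hy2 : Real.exp (-1) < 0.3678795 := by nlinarith [Real.exp_pos (-1)]
  have harg : -1 / Real.exp 1 = -(Real.exp (-1)) := by
    rw [Real.exp_neg]
    field_simp
  have hx1 : (0.69220:ℝ) < Real.exp (-1 / Real.exp 1) := by
    refine lt_of_lt_of_le exp_lb_17 ?_
    rw [harg]
    exact Real.exp_le_exp.2 (by linarith)
  have hx2 : Real.exp (-1 / Real.exp 1) < 0.69221 := by
    refine lt_of_le_of_lt ?_ exp_ub_17
    rw [harg]
    exact Real.exp_le_exp.2 (by linarith)
  -- bounds on β
  have hden : (0:ℝ) < 1 - Real.exp (-1) := by linarith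
  have hβeq : β * (1 - Real.exp (-1)) = Real.exp (-1 / Real.exp 1) - Real.exp (-1) := by
    rw [hβ]; field_simp
  have hbl : (0.513:ℝ) ≤ β := by nlinarith
  have hbu : β ≤ 0.5131 := by nlinarith
  constructor
  · rw [hγ]
    nlinarith [sq_nonneg (β - 0.513), sq_nonneg (β - 0.5131), mul_nonneg (by linarith : (0:ℝ) ≤ β - 0.513) (by linarith : (0:ℝ) ≤ Real.exp (-1))]
  · -- part 2 : concavity argument
    intro s hs0 hs1
    set X := Real.exp (-1 / Real.exp 1) with hX
    set Y := Real.exp (-1) with hY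
    set A : ℝ := 1 - X - β / Real.exp 1 with hA
    set B : ℝ := β - β ^ 2 with hB
    set C : ℝ := 2 * β - β ^ 2 with hC
    have hBpos : 0 ≤ B := by rw [hB]; nlinarith
    have hBC : 2 * B - C ≤ 0 := by rw [hB, hC]; nlinarith
    set g : ℝ → ℝ := fun t => (A - γ) * t - B * (t * Real.exp (-t)) + C * (1 - Real.exp (-t))
      with hg
    have hexp : ∀ t : ℝ, HasDerivAt (fun u => Real.exp (-u)) (-Real.exp (-t)) t := by
      intro t
      exact ((Real.hasDerivAt_exp (-t)).comp t (hasDerivAt_neg t)).congr_deriv (by simp)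
    set g' : ℝ → ℝ := fun t => (A - γ) - B * (Real.exp (-t) - t * Real.exp (-t))
        + C * Real.exp (-t) with hg'
    have hdg : ∀ t : ℝ, HasDerivAt g (g' t) t := by
      intro t
      have h1 : HasDerivAt (fun u : ℝ => u * Real.exp (-u))
          (1 * Real.exp (-t) + t * -Real.exp (-t)) t := (hasDerivAt_id t).mul (hexp t)
      have h2 : HasDerivAt (fun u : ℝ => (A - γ) * u) (A - γ) t := by
        simpa using (hasDerivAt_id t).const_mul (A - γ)
      have h3 : HasDerivAt (fun u : ℝ => 1 - Real.exp (-u)) (-(-Real.exp (-t))) t :=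
        (hexp t).const_sub 1
      have := (h2.sub (h1.const_mul B)).add ((h3.const_mul C))
      exact this.congr_deriv (by ring)
    have hdg' : ∀ t : ℝ, HasDerivAt g' (Real.exp (-t) * (2 * B - C - B * t)) t := by
      intro t
      have h1 : HasDerivAt (fun u : ℝ => u * Real.exp (-u))
          (1 * Real.exp (-t) + t * -Real.exp (-t)) t := (hasDerivAt_id t).mul (hexp t)
      have h4 : HasDerivAt (fun u : ℝ => Real.exp (-u) - u * Real.exp (-u))
          (-Real.exp (-t) - (1 * Real.exp (-t) + t * -Real.exp (-t))) t := (hexp t).sub h1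
      have := ((h4.const_mul B).const_sub (A - γ)).add ((hexp t).const_mul C)
      exact this.congr_deriv (by ring)
    have hderiv : deriv g = g' := funext fun t => (hdg t).deriv
    have hconc : ConcaveOn ℝ (Set.Icc (0:ℝ) 1) g := by
      apply concaveOn_of_deriv2_nonpos' (convex_Icc 0 1)
      · exact fun t _ => (hdg t).differentiableAt.differentiableWithinAt
      · rw [hderiv]
        exact fun t _ => (hdg' t).differentiableAt.differentiableWithinAt
      · intro t ht
        have : deriv^[2] g t = deriv (deriv g) t := by
          rw [Function.iterate_succ, Function.iterate_one]; rfl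
        rw [this, hderiv, (hdg' t).deriv]
        have h1 : 0 ≤ B * t := mul_nonneg hBpos ht.1
        have h2 : 0 < Real.exp (-t) := Real.exp_pos _
        nlinarith
    have hg0 : g 0 = 0 := by simp [hg]
    have hg1 : g 1 = 0 := by
      have hinv : β / Real.exp 1 = β * Real.exp (-1) := by
        rw [Real.exp_neg]; ring
      simp only [hg, hA, hB, hC, hγ, hinv, one_mul, mul_one]
      ring
    have key := hconc.2 (Set.mem_Icc.2 ⟨le_refl 0, zero_le_one⟩)
      (Set.mem_Icc.2 ⟨zero_le_one, le_refl 1⟩)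
      (show (0:ℝ) ≤ 1 - s by linarith) hs0 (show (1 - s) + s = 1 by ring)
    rw [hg0, hg1] at key
    have hsum : (1 - s) • (0:ℝ) + s • (1:ℝ) = s := by simp
    rw [hsum] at key
    have hkey : 0 ≤ g s := by
      simpa [smul_eq_mul] using key
    have hgs : g s = (1 - X - β / Real.exp 1) * s - (β - β ^ 2) * s * Real.exp (-s)
        + (2 * β - β ^ 2) * (1 - Real.exp (-s)) - γ * s := by
      simp only [hg, hA, hB, hC]; ring
    rw [hgs] at hkey
    show A * s - B * s * Real.exp (-s) + C * (1 - Real.exp (-s)) ≥ γ * s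
    rw [hA, hB, hC]
    linarith only [hkey]
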